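/- Let K be a field, let r ≥ 1 be an integer, let x₁, …, x_r ∈ K be pairwise distinct, and let t ∈ K satisfy 1 − x_i t ≠ 0 for all i. Then ∏_{i=1}^{r} (1 − x_i t)^{−1} = ∑_{i=1}^{r} x_i^{r−1} / ( ∏_{j ≠ i}(x_i − x_j) · (1 − x_i t) ). -/

import Mathlib

open Polynomial Finset

section aux

variable {K : Type*} [Field K] {r : ℕ}

lemma interp_eq (hr : 1 ≤ r) (x : Fin r → K) (hx : Function.Injective x) :
    (Polynomial.X ^ (r - 1) : K[X])
      = ∑ i : Fin r, Polynomial.C (x i ^ (r - 1)) * Lagrange.basis Finset.univ x i := by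
  have hdeg : (Polynomial.X ^ (r - 1) : K[X]).degree < (#(Finset.univ : Finset (Fin r)) : ℕ) := by
    rw [degree_X_pow, Finset.card_univ, Fintype.card_fin]
    exact_mod_cast Nat.sub_lt hr one_pos
  have h := Lagrange.eq_interpolate (s := (Finset.univ : Finset (Fin r))) (v := x)
    (f := Polynomial.X ^ (r - 1)) hx.injOn hdeg
  rw [Lagrange.interpolate_apply] at h
  simpa using h

lemma leadingCoeff_basis (x : Fin r → K) (hx : Function.Injective x) (i : Fin r) :
    (Lagrange.basis Finset.univ x i).leadingCoeff
      = ∏ j ∈ Finset.univ.erase i, (x i - x j)⁻¹ := by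
  rw [Lagrange.basis, leadingCoeff_prod]
  refine Finset.prod_congr rfl fun j hj => ?_
  have hne : x i ≠ x j := fun h => (Finset.mem_erase.mp hj).1.symm (hx h)
  rw [Lagrange.basisDivisor, leadingCoeff_mul, leadingCoeff_C, leadingCoeff_X_sub_C, mul_one]

lemma natDegree_basis' (hr : 1 ≤ r) (x : Fin r → K) (hx : Function.Injective x) (i : Fin r) :
    (Lagrange.basis Finset.univ x i).natDegree = r - 1 := by
  rw [Lagrange.natDegree_basis hx.injOn (Finset.mem_univ i), Finset.card_univ, Fintype.card_fin]

lemma sum_c (hr : 1 ≤ r) (x : Fin r → K) (hx : Function.Injective x) :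
    ∑ i : Fin r, x i ^ (r - 1) / ∏ j ∈ Finset.univ.erase i, (x i - x j) = 1 := by
  have h := congrArg (fun p : K[X] => p.coeff (r - 1)) (interp_eq hr x hx)
  simp only [coeff_X_pow, if_true, Polynomial.finset_sum_coeff, Polynomial.coeff_C_mul] at h
  rw [eq_comm] at h
  rw [← h]
  refine Finset.sum_congr rfl fun i _ => ?_
  have hco : (Lagrange.basis Finset.univ x i).coeff (r - 1)
      = (Lagrange.basis Finset.univ x i).leadingCoeff := by
    rw [Polynomial.leadingCoeff, natDegree_basis' hr x hx]
  rw [hco, leadingCoeff_basis x hx, Finset.prod_inv_distrib, div_eq_mul_inv]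

lemma eval_eq (hr : 1 ≤ r) (x : Fin r → K) (hx : Function.Injective x) (y : K) :
    y ^ (r - 1)
      = ∑ i : Fin r, x i ^ (r - 1)
          * ((∏ j ∈ Finset.univ.erase i, (y - x j)) / ∏ j ∈ Finset.univ.erase i, (x i - x j)) := by
  have h := congrArg (Polynomial.eval y) (interp_eq hr x hx)
  simp only [eval_pow, eval_X, eval_finset_sum, eval_mul, eval_C] at h
  rw [h]
  refine Finset.sum_congr rfl fun i _ => ?_
  congr 1
  rw [Lagrange.basis, Polynomial.eval_prod, div_eq_mul_inv, ← Finset.prod_inv_distrib,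
    mul_comm, ← Finset.prod_mul_distrib]
  refine Finset.prod_congr rfl fun j _ => ?_
  simp [Lagrange.basisDivisor, mul_comm]

lemma key (hr : 1 ≤ r) (x : Fin r → K) (hx : Function.Injective x) (t : K) :
    ∑ i : Fin r, x i ^ (r - 1)
        * ((∏ j ∈ Finset.univ.erase i, (1 - x j * t)) / ∏ j ∈ Finset.univ.erase i, (x i - x j))
      = 1 := by
  rcases eq_or_ne t 0 with rfl | ht0
  · simpa [div_eq_mul_inv, mul_comm] using sum_c hr x hx
  · have hcard : ∀ i : Fin r, #(Finset.univ.erase (i : Fin r)) = r - 1 := by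
      intro i
      rw [Finset.card_erase_of_mem (Finset.mem_univ i), Finset.card_univ, Fintype.card_fin]
    have hprod : ∀ i : Fin r, (∏ j ∈ Finset.univ.erase i, (1 - x j * t))
        = t ^ (r - 1) * ∏ j ∈ Finset.univ.erase i, (t⁻¹ - x j) := by
      intro i
      rw [← hcard i, ← Finset.prod_const, ← Finset.prod_mul_distrib]
      refine Finset.prod_congr rfl fun j _ => ?_
      field_simp
    calc ∑ i : Fin r, x i ^ (r - 1)
          * ((∏ j ∈ Finset.univ.erase i, (1 - x j * t)) / ∏ j ∈ Finset.univ.erase i, (x i - x j))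
        = t ^ (r - 1) * ∑ i : Fin r, x i ^ (r - 1)
          * ((∏ j ∈ Finset.univ.erase i, (t⁻¹ - x j)) / ∏ j ∈ Finset.univ.erase i, (x i - x j)) := by
          rw [Finset.mul_sum]
          refine Finset.sum_congr rfl fun i _ => ?_
          rw [hprod i]
          ring
      _ = t ^ (r - 1) * (t⁻¹) ^ (r - 1) := by rw [← eval_eq hr x hx]
      _ = 1 := by
          rw [← mul_pow, mul_inv_cancel₀ ht0, one_pow]

end aux

/-- Partial fraction decomposition of `H(t) = ∏_i (1 − x_i t)^{−1}`:
`∏_i (1 − x_i t)^{−1} = ∑_i x_i^{r−1} / (∏_{j ≠ i}(x_i − x_j) · (1 − x_i t))`. -/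
theorem statement1 {K : Type*} [Field K] {r : ℕ} (hr : 1 ≤ r) (x : Fin r → K)
    (hx : Function.Injective x) (t : K) (ht : ∀ i, 1 - x i * t ≠ 0) :
    ∏ i : Fin r, (1 - x i * t)⁻¹
      = ∑ i : Fin r,
          x i ^ (r - 1) / ((∏ j ∈ Finset.univ.erase i, (x i - x j)) * (1 - x i * t)) := by
  have hD : ∀ i : Fin r, (∏ j ∈ Finset.univ.erase i, (x i - x j)) ≠ 0 := by
    intro i
    refine Finset.prod_ne_zero_iff.mpr fun j hj => ?_
    exact sub_ne_zero.mpr fun h => (Finset.mem_erase.mp hj).1 (hx h.symm)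
  have hP : ∀ i : Fin r, (∏ j ∈ Finset.univ.erase i, (1 - x j * t)) ≠ 0 := by
    intro i
    exact Finset.prod_ne_zero_iff.mpr fun j _ => ht j
  have hstep : ∀ i : Fin r,
      x i ^ (r - 1) / ((∏ j ∈ Finset.univ.erase i, (x i - x j)) * (1 - x i * t))
        = (x i ^ (r - 1)
            * ((∏ j ∈ Finset.univ.erase i, (1 - x j * t)) / ∏ j ∈ Finset.univ.erase i, (x i - x j)))
          * ∏ k : Fin r, (1 - x k * t)⁻¹ := by
    intro i
    rw [Finset.prod_inv_distrib, ← Finset.mul_prod_erase _ _ (Finset.mem_univ i)]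
    set P := ∏ j ∈ Finset.univ.erase i, (1 - x j * t) with hPdef
    set D := ∏ j ∈ Finset.univ.erase i, (x i - x j) with hDdef
    have h1 : D ≠ 0 := hD i
    have h2 : P ≠ 0 := hP i
    have h3 : (1 - x i * t) ≠ 0 := ht i
    field_simp
  rw [Finset.sum_congr rfl fun i _ => hstep i, ← Finset.sum_mul, key hr x hx t, one_mul]
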